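/- Let (H₀, W₀, b₀) ∈ S with rank(W₀) ≥ C − 1, and let Z(t) = (H(t), W(t), b(t)) solve the gradient flow Z'(t) = −∇R_e(Z(t)) with Z(0) = (H₀, W₀, b₀). Then the limit lim_{t→∞} Z(t) exists and exhibits strong neural collapse: its limit (H∞, W∞, b∞) satisfies W∞W∞^⊤ = √N·(I_C − (1/C)·1_C 1_C^⊤), H∞ = (1/√N)·(W∞ ⊗ 1_N)^⊤, and b∞ = (1/C)·1_C. -/

import Mathlib

open Matrix Set Filter Topology

attribute [local instance] Matrix.normedAddCommGroup Matrix.normedSpace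

noncomputable section

/-- Membership in the subspace
`S = {(H, W, b) : H = (1/√N)(W ⊗ 1_N)ᵀ, 1_Cᵀ W = 0, b ∈ span{1_C}}`;
the `CN` columns are indexed by `Fin C × Fin N`. -/
def memS (C N p : ℕ) (H : Matrix (Fin p) (Fin C × Fin N) ℝ)
    (W : Matrix (Fin C) (Fin p) ℝ) (b : Fin C → ℝ) : Prop :=
  H = Matrix.of (fun j (cn : Fin C × Fin N) => (Real.sqrt N)⁻¹ * W cn.1 j) ∧
  (∀ j : Fin p, ∑ c : Fin C, W c j = 0) ∧
  (∃ β : ℝ, b = fun _ => β)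

/-- `A = W H + b 1_{CN}ᵀ - I_C ⊗ 1_Nᵀ`. -/
def Amat (C N p : ℕ) (H : Matrix (Fin p) (Fin C × Fin N) ℝ)
    (W : Matrix (Fin C) (Fin p) ℝ) (b : Fin C → ℝ) : Matrix (Fin C) (Fin C × Fin N) ℝ :=
  W * H + Matrix.of (fun c (_ : Fin C × Fin N) => b c)
    - Matrix.of (fun c (cn : Fin C × Fin N) => if cn.1 = c then (1 : ℝ) else 0)


def gq (n lam t : ℝ) : ℝ := Real.exp (-(2*n*t)) + lam * (1 - Real.exp (-(2*n*t))) / n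

def gf (n lam t : ℝ) : ℝ := (Real.sqrt (gq n lam t))⁻¹

lemma gq_pos {n lam : ℝ} (hn : 0 < n) (hlam : 0 ≤ lam) {t : ℝ} (ht : 0 ≤ t) :
    0 < gq n lam t := by
  have h1 : Real.exp (-(2*n*t)) ≤ 1 := by
    rw [Real.exp_le_one_iff]
    nlinarith
  have h2 : (0:ℝ) < Real.exp (-(2*n*t)) := Real.exp_pos _
  have : 0 ≤ lam * (1 - Real.exp (-(2*n*t))) / n :=
    div_nonneg (mul_nonneg hlam (by linarith)) hn.le
  unfold gq; linarith

lemma gf_pos {n lam : ℝ} (hn : 0 < n) (hlam : 0 ≤ lam) {t : ℝ} (ht : 0 ≤ t) :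
    0 < gf n lam t := by
  have := gq_pos hn hlam ht
  exact inv_pos.2 (Real.sqrt_pos.2 this)

lemma gf_zero (n lam : ℝ) : gf n lam 0 = 1 := by
  simp [gf, gq]

lemma gf_sq {n lam : ℝ} (hn : 0 < n) (hlam : 0 ≤ lam) {t : ℝ} (ht : 0 ≤ t) :
    (gf n lam t)^2 = (gq n lam t)⁻¹ := by
  rw [gf, inv_pow, Real.sq_sqrt (gq_pos hn hlam ht).le]

lemma hasDerivAt_gq (n lam t : ℝ) (hn : n ≠ 0) :
    HasDerivAt (gq n lam) ((lam - n) * (2 * Real.exp (-(2*n*t))) / n * n) t := by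
  have he : HasDerivAt (fun t => Real.exp (-(2*n*t))) (Real.exp (-(2*n*t)) * (-(2*n))) t := by
    have : HasDerivAt (fun t : ℝ => -(2*n*t)) (-(2*n)) t := by
      simpa using ((hasDerivAt_id t).const_mul (2*n)).fun_neg
    exact this.exp
  have : HasDerivAt (gq n lam)
      (Real.exp (-(2*n*t)) * (-(2*n)) + lam * (-(Real.exp (-(2*n*t)) * (-(2*n)))) / n) t := by
    unfold gq
    exact he.add ((((he.const_sub 1)).const_mul lam).div_const n)
  convert this using 1
  field_simp
  ring

lemma hasDerivAt_gf {n lam : ℝ} (hn : 0 < n) (hlam : 0 ≤ lam) {t : ℝ} (ht : 0 ≤ t) :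
    HasDerivAt (gf n lam) (n * gf n lam t - lam * (gf n lam t)^3) t := by
  have hq := gq_pos hn hlam ht
  have hs0 : (0:ℝ) < Real.sqrt (gq n lam t) := Real.sqrt_pos.2 hq
  have hs : Real.sqrt (gq n lam t) ≠ 0 := ne_of_gt hs0
  have hd : HasDerivAt (gq n lam) ((lam - n) * (2 * Real.exp (-(2*n*t))) / n * n) t :=
    hasDerivAt_gq n lam t hn.ne'
  have hd' : HasDerivAt (gq n lam) ((lam - n) * (2 * Real.exp (-(2*n*t)))) t := by
    convert hd using 1; field_simp
  have h1 : HasDerivAt (fun u => Real.sqrt (gq n lam u))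
      ((lam - n) * (2 * Real.exp (-(2*n*t))) / (2 * Real.sqrt (gq n lam t))) t :=
    hd'.sqrt hq.ne'
  have h2 : HasDerivAt (gf n lam)
      (-((lam - n) * (2 * Real.exp (-(2*n*t))) / (2 * Real.sqrt (gq n lam t))) /
        (Real.sqrt (gq n lam t))^2) t := h1.inv hs
  convert h2 using 1
  have hsq : Real.sqrt (gq n lam t) ^ 2 = gq n lam t := Real.sq_sqrt hq.le
  have key : n * gq n lam t - lam = (n - lam) * Real.exp (-(2*n*t)) := by
    unfold gq; field_simp; ring
  rw [gf]
  set s := Real.sqrt (gq n lam t) with hsdef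
  set e := Real.exp (-(2*n*t)) with he
  field_simp
  linear_combination key + n*hsq

lemma tendsto_exp_neg {n : ℝ} (hn : 0 < n) :
    Tendsto (fun t : ℝ => Real.exp (-(2*n*t))) atTop (𝓝 0) := by
  apply Real.tendsto_exp_atBot.comp
  have h : Tendsto (fun t : ℝ => (-(2*n)) * t) atTop atBot :=
    tendsto_id.const_mul_atTop_of_neg (by linarith)
  exact h.congr (fun t => by ring)

lemma tendsto_gq {n lam : ℝ} (hn : 0 < n) :
    Tendsto (gq n lam) atTop (𝓝 (lam / n)) := by
  have hE := tendsto_exp_neg hn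
  have h : Tendsto (gq n lam) atTop (𝓝 (0 + lam * (1 - 0) / n)) := by
    exact hE.add ((((hE.const_sub 1)).const_mul lam).div_const n)
  simpa using h

lemma tendsto_gf {n lam : ℝ} (hn : 0 < n) (hlam : 0 < lam) :
    Tendsto (gf n lam) atTop (𝓝 ((Real.sqrt (lam / n))⁻¹)) := by
  have h : Tendsto (fun t => Real.sqrt (gq n lam t)) atTop (𝓝 (Real.sqrt (lam / n))) :=
    (Real.continuous_sqrt.tendsto _).comp (tendsto_gq hn)
  exact h.inv₀ (ne_of_gt (Real.sqrt_pos.2 (div_pos hlam hn)))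


def betaf (a c β₀ t : ℝ) : ℝ := c⁻¹ + (β₀ - c⁻¹) * Real.exp (-(a*c*t))
-- here a = N, c = C

lemma betaf_zero (a c β₀ : ℝ) : betaf a c β₀ 0 = β₀ := by simp [betaf]

lemma hasDerivAt_betaf (a c β₀ t : ℝ) (hc : c ≠ 0) :
    HasDerivAt (betaf a c β₀) (a - a * c * betaf a c β₀ t) t := by
  have h : HasDerivAt (fun t : ℝ => -(a*c*t)) (-(a*c)) t := by
    simpa using ((hasDerivAt_id t).const_mul (a*c)).fun_neg
  have h2 : HasDerivAt (betaf a c β₀)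
      ((β₀ - c⁻¹) * (Real.exp (-(a*c*t)) * (-(a*c)))) t :=
    ((h.exp).const_mul _).const_add _
  convert h2 using 1
  unfold betaf
  field_simp
  ring

lemma tendsto_betaf {a c : ℝ} (β₀ : ℝ) (ha : 0 < a) (hc : 0 < c) :
    Tendsto (betaf a c β₀) atTop (𝓝 c⁻¹) := by
  have hE : Tendsto (fun t : ℝ => Real.exp (-(a*c*t))) atTop (𝓝 0) := by
    apply Real.tendsto_exp_atBot.comp
    have h : Tendsto (fun t : ℝ => (-(a*c)) * t) atTop atBot :=
      tendsto_id.const_mul_atTop_of_neg (by nlinarith)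
    exact h.congr (fun t => by ring)
  have h : Tendsto (betaf a c β₀) atTop (𝓝 (c⁻¹ + (β₀ - c⁻¹) * 0)) :=
    ((hE.const_mul _)).const_add _
  simpa using h

section core
variable {C p : ℕ}
variable (U : Matrix (Fin C) (Fin C) ℝ) (B : Matrix (Fin C) (Fin p) ℝ) (lam : Fin C → ℝ)

/-- `U * diagonal f * B`. -/
def WexpM (f : Fin C → ℝ) : Matrix (Fin C) (Fin p) ℝ := U * (Matrix.diagonal f) * B

lemma WexpM_apply (f : Fin C → ℝ) (c : Fin C) (j : Fin p) :
    WexpM U B f c j = ∑ i, U c i * f i * B i j := by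
  rw [WexpM, Matrix.mul_apply]
  exact Finset.sum_congr rfl fun i _ => by rw [Matrix.mul_diagonal]

lemma WexpM_mul_transpose (hBB : B * Bᵀ = Matrix.diagonal lam) (f g : Fin C → ℝ) :
    WexpM U B f * (WexpM U B g)ᵀ = U * Matrix.diagonal (fun i => f i * g i * lam i) * Uᵀ := by
  unfold WexpM
  rw [Matrix.transpose_mul, Matrix.transpose_mul, Matrix.diagonal_transpose]
  calc U * Matrix.diagonal f * B * (Bᵀ * (Matrix.diagonal g * Uᵀ))
      = U * (Matrix.diagonal f * ((B * Bᵀ) * Matrix.diagonal g)) * Uᵀ := by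
        simp only [Matrix.mul_assoc]
    _ = U * Matrix.diagonal (fun i => f i * g i * lam i) * Uᵀ := by
        rw [hBB, Matrix.diagonal_mul_diagonal, Matrix.diagonal_mul_diagonal]
        have h : (fun i => f i * (lam i * g i)) = fun i => f i * g i * lam i :=
          funext fun i => by ring
        rw [h]

lemma UDU_apply (h : Fin C → ℝ) (c d : Fin C) :
    (U * Matrix.diagonal h * Uᵀ) c d = ∑ i, U c i * h i * U d i := by
  rw [Matrix.mul_apply]
  exact Finset.sum_congr rfl fun i _ => by
    rw [Matrix.mul_diagonal, Matrix.transpose_apply]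

lemma B_row_zero (hBB : B * Bᵀ = Matrix.diagonal lam) {i : Fin C} (hi : lam i = 0)
    (j : Fin p) : B i j = 0 := by
  have h : ∑ j', B i j' * B i j' = 0 := by
    have := congrFun (congrFun hBB i) i
    simpa [Matrix.mul_apply, Matrix.diagonal_apply_eq, hi] using this
  have h2 : ∀ j' ∈ Finset.univ, B i j' * B i j' = 0 :=
    (Finset.sum_eq_zero_iff_of_nonneg (fun j' _ => mul_self_nonneg _)).1 h
  have := h2 j (Finset.mem_univ j)
  nlinarith [this]

lemma WexpM_colsum (hBB : B * Bᵀ = Matrix.diagonal lam)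
    (hcolU : ∀ i, (∑ c, U c i) * lam i = 0) (f : Fin C → ℝ) (j : Fin p) :
    ∑ c, WexpM U B f c j = 0 := by
  simp only [WexpM_apply]
  rw [Finset.sum_comm]
  apply Finset.sum_eq_zero
  intro i _
  by_cases hi : lam i = 0
  · simp [B_row_zero B lam hBB hi]
  · have hU : ∑ c, U c i = 0 := by
      have := hcolU i
      rcases mul_eq_zero.1 this with h | h
      · exact h
      · exact absurd h hi
    calc ∑ c, U c i * f i * B i j = (∑ c, U c i) * (f i * B i j) := by
          rw [Finset.sum_mul]; exact Finset.sum_congr rfl fun c _ => by ring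
      _ = 0 := by rw [hU, zero_mul]

lemma UDU_rowsum (h : Fin C → ℝ) (hvanish : ∀ i, (∑ c, U c i) * h i = 0) (c : Fin C) :
    ∑ d, (U * Matrix.diagonal h * Uᵀ) c d = 0 := by
  simp only [UDU_apply]
  rw [Finset.sum_comm]
  apply Finset.sum_eq_zero
  intro i _
  calc ∑ d, U c i * h i * U d i = (U c i) * ((∑ d, U d i) * h i) := by
        rw [Finset.sum_mul, Finset.mul_sum]
        exact Finset.sum_congr rfl fun d _ => by ring
    _ = 0 := by rw [hvanish, mul_zero]

end core

section ode
variable {Cn Nn pn : ℕ}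
variable (n : ℝ) (U : Matrix (Fin Cn) (Fin Cn) ℝ) (B : Matrix (Fin Cn) (Fin pn) ℝ)
  (lam : Fin Cn → ℝ)

/-- `H`-component of the explicit solution built from `V`. -/
def Hof (V : Matrix (Fin Cn) (Fin pn) ℝ) : Matrix (Fin pn) (Fin Cn × Fin Nn) ℝ :=
  Matrix.of fun j cn => n⁻¹ * V cn.1 j

lemma UDU_mul_WexpM (hU1U : Uᵀ * U = 1) (h f : Fin Cn → ℝ) :
    (U * Matrix.diagonal h * Uᵀ) * WexpM U B f = WexpM U B (fun i => h i * f i) := by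
  unfold WexpM
  calc (U * Matrix.diagonal h * Uᵀ) * (U * Matrix.diagonal f * B)
      = U * Matrix.diagonal h * (Uᵀ * U) * Matrix.diagonal f * B := by
        simp only [Matrix.mul_assoc]
    _ = U * (Matrix.diagonal h * Matrix.diagonal f) * B := by
        rw [hU1U, Matrix.mul_one]
        simp only [Matrix.mul_assoc]
    _ = U * Matrix.diagonal (fun i => h i * f i) * B := by
        rw [Matrix.diagonal_mul_diagonal]

lemma UDU_transpose (h : Fin Cn → ℝ) :
    (U * Matrix.diagonal h * Uᵀ)ᵀ = U * Matrix.diagonal h * Uᵀ := by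
  rw [Matrix.transpose_mul, Matrix.transpose_mul, Matrix.transpose_transpose,
    Matrix.diagonal_transpose, Matrix.mul_assoc]

lemma blocks_mul_Hof_transpose (Q : Matrix (Fin Cn) (Fin Cn) ℝ)
    (V : Matrix (Fin Cn) (Fin pn) ℝ) :
    (Matrix.of fun c (cn : Fin Cn × Fin Nn) => Q c cn.1) * (Hof (Nn := Nn) n V)ᵀ
      = ((Nn : ℝ) * n⁻¹) • (Q * V) := by
  ext c j
  simp only [Matrix.mul_apply, Matrix.of_apply, Matrix.transpose_apply, Hof,
    Matrix.smul_apply, smul_eq_mul]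
  rw [Fintype.sum_prod_type]
  simp only [Finset.sum_const, Finset.card_univ, Fintype.card_fin, nsmul_eq_mul]
  rw [Finset.mul_sum]
  exact Finset.sum_congr rfl fun c' _ => by ring

lemma mul_blocks (X : Matrix (Fin pn) (Fin Cn) ℝ) (Q : Matrix (Fin Cn) (Fin Cn) ℝ) :
    X * (Matrix.of fun c (cn : Fin Cn × Fin Nn) => Q c cn.1)
      = Matrix.of (fun j (cn : Fin Cn × Fin Nn) => (X * Q) j cn.1) := by
  ext j cn
  simp [Matrix.mul_apply]

lemma Amat_exp (f : Fin Cn → ℝ) (β : ℝ) :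
    Amat Cn Nn pn (Hof n (WexpM U B f)) (WexpM U B f) (fun _ => β)
      = Matrix.of fun c (cn : Fin Cn × Fin Nn) =>
          ((n⁻¹ • (WexpM U B f * (WexpM U B f)ᵀ) + β • (Matrix.of fun _ _ => (1:ℝ))
            - 1 : Matrix (Fin Cn) (Fin Cn) ℝ)) c cn.1 := by
  ext c cn
  have hWH : (WexpM U B f * Hof n (WexpM U B f)) c cn
      = n⁻¹ * (WexpM U B f * (WexpM U B f)ᵀ) c cn.1 := by
    simp only [Matrix.mul_apply, Hof, Matrix.of_apply, Matrix.transpose_apply, Finset.mul_sum]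
    exact Finset.sum_congr rfl fun j _ => by ring
  simp only [Amat, Matrix.sub_apply, Matrix.add_apply, Matrix.of_apply, Matrix.smul_apply,
    Matrix.one_apply, smul_eq_mul, hWH]
  have : (if cn.1 = c then (1:ℝ) else 0) = if c = cn.1 then (1:ℝ) else 0 := by
    simp [eq_comm]
  rw [this]
  ring

lemma colJ (hBB : B * Bᵀ = Matrix.diagonal lam)
    (hcolU : ∀ i, (∑ c, U c i) * lam i = 0) (f : Fin Cn → ℝ) :
    ((Matrix.of fun _ _ => (1:ℝ)) : Matrix (Fin Cn) (Fin Cn) ℝ) * WexpM U B f = 0 := by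
  ext c j
  rw [Matrix.mul_apply]
  simp only [Matrix.of_apply, one_mul, Matrix.zero_apply]
  exact WexpM_colsum U B lam hBB hcolU f j

lemma colJ' (hBB : B * Bᵀ = Matrix.diagonal lam)
    (hcolU : ∀ i, (∑ c, U c i) * lam i = 0) (f : Fin Cn → ℝ) :
    (WexpM U B f)ᵀ * ((Matrix.of fun _ _ => (1:ℝ)) : Matrix (Fin Cn) (Fin Cn) ℝ) = 0 := by
  ext j c
  rw [Matrix.mul_apply]
  simp only [Matrix.of_apply, mul_one, Matrix.zero_apply, Matrix.transpose_apply]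
  exact WexpM_colsum U B lam hBB hcolU f j

lemma W_ode_identity (hU1U : Uᵀ * U = 1) (hBB : B * Bᵀ = Matrix.diagonal lam)
    (hcolU : ∀ i, (∑ c, U c i) * lam i = 0) (hn : n ≠ 0) (hn2 : n ^ 2 = (Nn : ℝ))
    (f : Fin Cn → ℝ) (β : ℝ) :
    -(Amat Cn Nn pn (Hof n (WexpM U B f)) (WexpM U B f) (fun _ => β)
        * (Hof (Nn := Nn) n (WexpM U B f))ᵀ)
      = WexpM U B (fun i => n * f i - lam i * f i ^ 3) := by
  rw [Amat_exp, blocks_mul_Hof_transpose]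
  have hPW : (WexpM U B f * (WexpM U B f)ᵀ) * WexpM U B f
      = WexpM U B (fun i => f i * f i * lam i * f i) := by
    rw [WexpM_mul_transpose U B lam hBB, UDU_mul_WexpM U B hU1U]
  rw [Matrix.sub_mul, Matrix.add_mul, Matrix.smul_mul, Matrix.smul_mul, hPW,
    colJ U B lam hBB hcolU f, Matrix.one_mul, smul_zero, add_zero]
  ext c j
  simp only [Matrix.neg_apply, Matrix.smul_apply, Matrix.sub_apply, smul_eq_mul, WexpM_apply]
  rw [← hn2, Finset.mul_sum, ← Finset.sum_sub_distrib, Finset.mul_sum,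
    ← Finset.sum_neg_distrib]
  exact Finset.sum_congr rfl fun i _ => by field_simp; ring

lemma H_ode_identity (hU1U : Uᵀ * U = 1) (hBB : B * Bᵀ = Matrix.diagonal lam)
    (hcolU : ∀ i, (∑ c, U c i) * lam i = 0) (hn : n ≠ 0) (hn2 : n ^ 2 = (Nn : ℝ))
    (f : Fin Cn → ℝ) (β : ℝ) :
    -((WexpM U B f)ᵀ * Amat Cn Nn pn (Hof n (WexpM U B f)) (WexpM U B f) (fun _ => β))
      = Hof (Nn := Nn) n (WexpM U B (fun i => n * f i - lam i * f i ^ 3)) := by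
  rw [Amat_exp, mul_blocks]
  have hPW : (WexpM U B f * (WexpM U B f)ᵀ) * WexpM U B f
      = WexpM U B (fun i => f i * f i * lam i * f i) := by
    rw [WexpM_mul_transpose U B lam hBB, UDU_mul_WexpM U B hU1U]
  have hWQ : (WexpM U B f)ᵀ * (n⁻¹ • (WexpM U B f * (WexpM U B f)ᵀ)
        + β • (Matrix.of fun _ _ => (1:ℝ)) - 1 : Matrix (Fin Cn) (Fin Cn) ℝ)
      = n⁻¹ • (WexpM U B (fun i => f i * f i * lam i * f i))ᵀ - (WexpM U B f)ᵀ := by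
    rw [Matrix.mul_sub, Matrix.mul_add, Matrix.mul_one, Matrix.mul_smul, Matrix.mul_smul,
      colJ' U B lam hBB hcolU f, smul_zero, add_zero]
    congr 1
    congr 1
    have hsym : (WexpM U B f * (WexpM U B f)ᵀ)ᵀ = WexpM U B f * (WexpM U B f)ᵀ := by
      rw [WexpM_mul_transpose U B lam hBB]
      exact UDU_transpose U _
    calc (WexpM U B f)ᵀ * (WexpM U B f * (WexpM U B f)ᵀ)
        = ((WexpM U B f * (WexpM U B f)ᵀ) * WexpM U B f)ᵀ := by
          rw [Matrix.transpose_mul, hsym]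
      _ = (WexpM U B (fun i => f i * f i * lam i * f i))ᵀ := by rw [hPW]
  rw [hWQ]
  ext j cn
  simp only [Matrix.neg_apply, Matrix.of_apply, Matrix.sub_apply, Matrix.smul_apply,
    Matrix.transpose_apply, smul_eq_mul, Hof, WexpM_apply]
  rw [Finset.mul_sum, ← Finset.sum_sub_distrib, ← Finset.sum_neg_distrib, Finset.mul_sum]
  exact Finset.sum_congr rfl fun i _ => by field_simp; ring

lemma b_ode_identity (hBB : B * Bᵀ = Matrix.diagonal lam)
    (hcolU : ∀ i, (∑ c, U c i) * lam i = 0) (hn : n ≠ 0)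
    (f : Fin Cn → ℝ) (β : ℝ) :
    (fun c => -(∑ cn : Fin Cn × Fin Nn,
        Amat Cn Nn pn (Hof n (WexpM U B f)) (WexpM U B f) (fun _ => β) c cn))
      = fun _ => (Nn : ℝ) - (Nn : ℝ) * (Cn : ℝ) * β := by
  funext c
  rw [Amat_exp]
  simp only [Matrix.of_apply]
  rw [Fintype.sum_prod_type]
  have hProw : ∑ d, (U * Matrix.diagonal (fun i => f i * f i * lam i) * Uᵀ) c d = 0 := by
    refine UDU_rowsum U _ (fun i => ?_) c
    calc (∑ c, U c i) * (f i * f i * lam i) = (f i * f i) * ((∑ c, U c i) * lam i) := by ring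
      _ = 0 := by rw [hcolU i, mul_zero]
  have hrow : ∑ d, (n⁻¹ • (WexpM U B f * (WexpM U B f)ᵀ)
      + β • (Matrix.of fun _ _ => (1:ℝ)) - 1 : Matrix (Fin Cn) (Fin Cn) ℝ) c d
      = (Cn : ℝ) * β - 1 := by
    simp only [Matrix.sub_apply, Matrix.add_apply, Matrix.smul_apply, Matrix.of_apply,
      smul_eq_mul, mul_one]
    rw [Finset.sum_sub_distrib, Finset.sum_add_distrib, ← Finset.mul_sum,
      WexpM_mul_transpose U B lam hBB, hProw, mul_zero, zero_add, Finset.sum_const,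
      Finset.card_univ, Fintype.card_fin, nsmul_eq_mul]
    have hone : ∑ d, (1 : Matrix (Fin Cn) (Fin Cn) ℝ) c d = 1 := by
      simp [Matrix.one_apply]
    rw [hone]
  dsimp only
  simp only [Finset.sum_const, Finset.card_univ, Fintype.card_fin, nsmul_eq_mul]
  rw [← Finset.mul_sum, hrow]
  ring

lemma WexpM_eq_sum_smul (f : Fin Cn → ℝ) :
    WexpM U B f = ∑ i, f i • (Matrix.of fun c j => U c i * B i j) := by
  ext c j
  rw [WexpM_apply]
  rw [Matrix.sum_apply]
  simp only [Matrix.smul_apply, Matrix.of_apply, smul_eq_mul]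
  exact Finset.sum_congr rfl fun i _ => by ring

lemma Hof_WexpM_eq_sum_smul (f : Fin Cn → ℝ) :
    Hof (Nn := Nn) n (WexpM U B f)
      = ∑ i, f i • (Matrix.of fun (j : Fin pn) (cn : Fin Cn × Fin Nn) =>
          n⁻¹ * (U cn.1 i * B i j)) := by
  ext j cn
  show n⁻¹ * WexpM U B f cn.1 j = _
  rw [WexpM_apply]
  rw [Matrix.sum_apply]
  simp only [Matrix.smul_apply, Matrix.of_apply, smul_eq_mul]
  rw [Finset.mul_sum]
  exact Finset.sum_congr rfl fun i _ => by ring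

lemma hasDerivAt_WexpT (hn : 0 < n) (hlam : ∀ i, 0 ≤ lam i) {t : ℝ} (ht : 0 ≤ t) :
    HasDerivAt (fun t' => WexpM U B (fun i => gf n (lam i) t'))
      (WexpM U B (fun i => n * gf n (lam i) t - lam i * (gf n (lam i) t) ^ 3)) t := by
  have h : HasDerivAt (fun t' => ∑ i, gf n (lam i) t' • (Matrix.of fun c j => U c i * B i j))
      (∑ i, (n * gf n (lam i) t - lam i * (gf n (lam i) t) ^ 3) •
        (Matrix.of fun c j => U c i * B i j)) t := by
    apply HasDerivAt.fun_sum
    intro i _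
    exact (hasDerivAt_gf hn (hlam i) ht).smul_const _
  rw [WexpM_eq_sum_smul]
  exact h.congr_of_eventuallyEq (Filter.Eventually.of_forall fun t' => WexpM_eq_sum_smul U B _)

lemma hasDerivAt_HexpT (hn : 0 < n) (hlam : ∀ i, 0 ≤ lam i) {t : ℝ} (ht : 0 ≤ t) :
    HasDerivAt (fun t' => Hof (Nn := Nn) n (WexpM U B (fun i => gf n (lam i) t')))
      (Hof (Nn := Nn) n (WexpM U B
        (fun i => n * gf n (lam i) t - lam i * (gf n (lam i) t) ^ 3))) t := by
  have h : HasDerivAt (fun t' => ∑ i, gf n (lam i) t' •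
      (Matrix.of fun (j : Fin pn) (cn : Fin Cn × Fin Nn) => n⁻¹ * (U cn.1 i * B i j)))
      (∑ i, (n * gf n (lam i) t - lam i * (gf n (lam i) t) ^ 3) •
        (Matrix.of fun (j : Fin pn) (cn : Fin Cn × Fin Nn) => n⁻¹ * (U cn.1 i * B i j))) t := by
    apply HasDerivAt.fun_sum
    intro i _
    exact (hasDerivAt_gf hn (hlam i) ht).smul_const _
  rw [Hof_WexpM_eq_sum_smul]
  exact h.congr_of_eventuallyEq
    (Filter.Eventually.of_forall fun t' => Hof_WexpM_eq_sum_smul n U B _)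

lemma hasDerivAt_bexpT (a c β₀ : ℝ) (hc : c ≠ 0) (t : ℝ) :
    HasDerivAt (fun t' => (fun _ : Fin Cn => betaf a c β₀ t'))
      (fun _ : Fin Cn => a - a * c * betaf a c β₀ t) t := by
  have h : HasDerivAt (fun t' => betaf a c β₀ t' • (fun _ : Fin Cn => (1:ℝ)))
      ((a - a * c * betaf a c β₀ t) • (fun _ : Fin Cn => (1:ℝ))) t :=
    (hasDerivAt_betaf a c β₀ t hc).smul_const _
  have e1 : ∀ β : ℝ, β • (fun _ : Fin Cn => (1:ℝ)) = (fun _ : Fin Cn => β) := by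
    intro β; funext x; simp
  rw [← e1]
  exact h.congr_of_eventuallyEq (Filter.Eventually.of_forall fun t' => (e1 _).symm)

lemma Mi_zero (hBB : B * Bᵀ = Matrix.diagonal lam) {i : Fin Cn} (hi : lam i = 0) :
    (Matrix.of fun c j => U c i * B i j) = (0 : Matrix (Fin Cn) (Fin pn) ℝ) := by
  ext c j
  simp [B_row_zero B lam hBB hi]

lemma tendsto_WexpT (hn : 0 < n) (hBB : B * Bᵀ = Matrix.diagonal lam)
    (hlam : ∀ i, 0 ≤ lam i) :
    Tendsto (fun t => WexpM U B (fun i => gf n (lam i) t)) atTop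
      (𝓝 (WexpM U B (fun i => (Real.sqrt (lam i / n))⁻¹))) := by
  have h : Tendsto (fun t => ∑ i, gf n (lam i) t • (Matrix.of fun c j => U c i * B i j))
      atTop (𝓝 (∑ i, (Real.sqrt (lam i / n))⁻¹ • (Matrix.of fun c j => U c i * B i j))) := by
    apply tendsto_finset_sum
    intro i _
    by_cases hi : lam i = 0
    · simp only [Mi_zero U B lam hBB hi, smul_zero]
      exact tendsto_const_nhds
    · exact (tendsto_gf hn (lt_of_le_of_ne (hlam i) (Ne.symm hi))).smul_const _
  rw [WexpM_eq_sum_smul]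
  exact h.congr (fun t => (WexpM_eq_sum_smul U B _).symm)

lemma tendsto_HexpT (hn : 0 < n) (hBB : B * Bᵀ = Matrix.diagonal lam)
    (hlam : ∀ i, 0 ≤ lam i) :
    Tendsto (fun t => Hof (Nn := Nn) n (WexpM U B (fun i => gf n (lam i) t))) atTop
      (𝓝 (Hof (Nn := Nn) n (WexpM U B (fun i => (Real.sqrt (lam i / n))⁻¹)))) := by
  have hz : ∀ i, lam i = 0 → (Matrix.of fun (j : Fin pn) (cn : Fin Cn × Fin Nn) =>
      n⁻¹ * (U cn.1 i * B i j)) = 0 := by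
    intro i hi
    ext j cn
    simp [B_row_zero B lam hBB hi]
  have h : Tendsto (fun t => ∑ i, gf n (lam i) t •
      (Matrix.of fun (j : Fin pn) (cn : Fin Cn × Fin Nn) => n⁻¹ * (U cn.1 i * B i j)))
      atTop (𝓝 (∑ i, (Real.sqrt (lam i / n))⁻¹ •
      (Matrix.of fun (j : Fin pn) (cn : Fin Cn × Fin Nn) => n⁻¹ * (U cn.1 i * B i j)))) := by
    apply tendsto_finset_sum
    intro i _
    by_cases hi : lam i = 0
    · simp only [hz i hi, smul_zero]
      exact tendsto_const_nhds
    · exact (tendsto_gf hn (lt_of_le_of_ne (hlam i) (Ne.symm hi))).smul_const _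
  rw [Hof_WexpM_eq_sum_smul]
  exact h.congr (fun t => (Hof_WexpM_eq_sum_smul n U B _).symm)

lemma tendsto_bexpT (a c β₀ : ℝ) (ha : 0 < a) (hc : 0 < c) :
    Tendsto (fun t => (fun _ : Fin Cn => betaf a c β₀ t)) atTop
      (𝓝 (fun _ : Fin Cn => c⁻¹)) := by
  have e1 : ∀ β : ℝ, β • (fun _ : Fin Cn => (1:ℝ)) = (fun _ : Fin Cn => β) := by
    intro β; funext x; simp
  have h : Tendsto (fun t => betaf a c β₀ t • (fun _ : Fin Cn => (1:ℝ))) atTop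
      (𝓝 (c⁻¹ • (fun _ : Fin Cn => (1:ℝ)))) := (tendsto_betaf β₀ ha hc).smul_const _
  rw [← e1]
  exact h.congr (fun t => e1 _)

lemma Wlim_mul_transpose (hBB : B * Bᵀ = Matrix.diagonal lam)
    (hn : 0 < n) (hlam : ∀ i, 0 ≤ lam i) (i₀ : Fin Cn)
    (hzero : ∀ i, lam i = 0 ↔ i = i₀)
    (hUi₀ : ∀ c d, U c i₀ * U d i₀ = (Cn : ℝ)⁻¹)
    (hUU1 : U * Uᵀ = 1) :
    WexpM U B (fun i => (Real.sqrt (lam i / n))⁻¹)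
        * (WexpM U B (fun i => (Real.sqrt (lam i / n))⁻¹))ᵀ
      = n • ((1 : Matrix (Fin Cn) (Fin Cn) ℝ)
          - (Cn : ℝ)⁻¹ • Matrix.of (fun _ _ => (1 : ℝ))) := by
  rw [WexpM_mul_transpose U B lam hBB]
  ext c d
  rw [UDU_apply]
  have hterm : ∀ i, U c i * ((Real.sqrt (lam i / n))⁻¹ * (Real.sqrt (lam i / n))⁻¹ * lam i)
      * U d i = n * (U c i * U d i) - (if i = i₀ then n * (U c i * U d i) else 0) := by
    intro i
    by_cases hi : lam i = 0
    · rw [if_pos ((hzero i).1 hi), hi]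
      ring
    · rw [if_neg (fun h => hi ((hzero i).2 h))]
      have hpos : 0 < lam i / n := div_pos (lt_of_le_of_ne (hlam i) (Ne.symm hi)) hn
      have hsq : (Real.sqrt (lam i / n))⁻¹ * (Real.sqrt (lam i / n))⁻¹ = (lam i / n)⁻¹ := by
        rw [← mul_inv, Real.mul_self_sqrt hpos.le]
      rw [hsq]
      field_simp
      ring
  rw [Finset.sum_congr rfl (fun i _ => hterm i), Finset.sum_sub_distrib,
    Finset.sum_ite_eq' Finset.univ i₀ (fun i => n * (U c i * U d i)),
    if_pos (Finset.mem_univ i₀), ← Finset.mul_sum]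
  have hdelta : ∑ i, U c i * U d i = (1 : Matrix (Fin Cn) (Fin Cn) ℝ) c d := by
    have := congrFun (congrFun hUU1 c) d
    rw [← this, Matrix.mul_apply]
    exact Finset.sum_congr rfl fun i _ => rfl
  rw [hdelta, hUi₀ c d]
  simp only [Matrix.smul_apply, Matrix.sub_apply, Matrix.one_apply, Matrix.of_apply,
    smul_eq_mul]
  ring

lemma colU_lam_zero (hBB : B * Bᵀ = Matrix.diagonal lam)
    (W₀ : Matrix (Fin Cn) (Fin pn) ℝ) (hW₀ : W₀ = U * B)
    (hcol0 : ∀ j, ∑ c, W₀ c j = 0) :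
    ∀ i, (∑ c, U c i) * lam i = 0 := by
  intro k
  have h1 : ∀ j, ∑ i, (∑ c, U c i) * B i j = 0 := by
    intro j
    have := hcol0 j
    rw [hW₀] at this
    calc ∑ i, (∑ c, U c i) * B i j = ∑ i, ∑ c, U c i * B i j := by
          exact Finset.sum_congr rfl fun i _ => by rw [Finset.sum_mul]
      _ = ∑ c, ∑ i, U c i * B i j := Finset.sum_comm
      _ = ∑ c, (U * B) c j := by
          exact Finset.sum_congr rfl fun c _ => (Matrix.mul_apply).symm
      _ = 0 := this
  have h2 : ∑ j, (∑ i, (∑ c, U c i) * B i j) * B k j = 0 := by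
    simp [h1]
  have step1 : ∑ i, (∑ c, U c i) * (if i = k then lam i else 0) = (∑ c, U c k) * lam k := by
    simp only [mul_ite, mul_zero]
    rw [Finset.sum_ite_eq' Finset.univ k (fun i => (∑ c, U c i) * lam i)]
    simp
  calc (∑ c, U c k) * lam k
      = ∑ i, (∑ c, U c i) * (if i = k then lam i else 0) := step1.symm
    _ = ∑ i, (∑ c, U c i) * (∑ j, B i j * B k j) := by
        refine Finset.sum_congr rfl fun i _ => ?_
        congr 1
        have hthis := congrFun (congrFun hBB i) k
        rw [Matrix.mul_apply, Matrix.diagonal_apply] at hthis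
        rw [← hthis]
        exact Finset.sum_congr rfl fun j _ => by rw [Matrix.transpose_apply]
    _ = ∑ j, (∑ i, (∑ c, U c i) * B i j) * B k j := by
        have e1 : ∀ i, (∑ c, U c i) * ∑ j, B i j * B k j
            = ∑ j, (∑ c, U c i) * B i j * B k j := by
          intro i
          rw [Finset.mul_sum]
          exact Finset.sum_congr rfl fun j _ => by ring
        rw [Finset.sum_congr rfl fun i _ => e1 i, Finset.sum_comm]
        exact Finset.sum_congr rfl fun j _ => by rw [Finset.sum_mul]
    _ = 0 := h2

lemma spectral_kernel (hC : 0 < Cn)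
    (hU1U : Uᵀ * U = 1) (hUU1 : U * Uᵀ = 1) (hBB : B * Bᵀ = Matrix.diagonal lam)
    (W₀ : Matrix (Fin Cn) (Fin pn) ℝ) (hW₀ : W₀ = U * B)
    (hcol0 : ∀ j, ∑ c, W₀ c j = 0) (hrank : Cn - 1 ≤ W₀.rank) :
    ∃ i₀ : Fin Cn, (∀ i, lam i = 0 ↔ i = i₀) ∧
      (∀ c d, U c i₀ * U d i₀ = (Cn : ℝ)⁻¹) := by
  classical
  have hwl := colU_lam_zero U B lam hBB W₀ hW₀ hcol0
  set w : Fin Cn → ℝ := fun i => ∑ c, U c i with hw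
  -- sum of squares of w equals Cn
  have hsumw : ∑ i, w i ^ 2 = (Cn : ℝ) := by
    have : ∀ c d : Fin Cn, ∑ i, U c i * U d i = if c = d then (1:ℝ) else 0 := by
      intro c d
      have := congrFun (congrFun hUU1 c) d
      rw [Matrix.mul_apply] at this
      simpa [Matrix.one_apply] using this
    calc ∑ i, w i ^ 2 = ∑ i, ∑ c, ∑ d, U c i * U d i := by
          refine Finset.sum_congr rfl fun i _ => ?_
          rw [hw]
          simp only [pow_two, Finset.sum_mul_sum]
      _ = ∑ c, ∑ d, ∑ i, U c i * U d i := by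
          rw [Finset.sum_comm]
          exact Finset.sum_congr rfl fun c _ => Finset.sum_comm
      _ = ∑ c, ∑ d, if c = d then (1:ℝ) else 0 := by
          exact Finset.sum_congr rfl fun c _ => Finset.sum_congr rfl fun d _ => this c d
      _ = (Cn : ℝ) := by
          simp [Finset.sum_ite_eq]
  -- rank of W₀ equals the number of nonzero eigenvalues
  have hUdet : IsUnit U.det := by
    apply Matrix.isUnit_det_of_right_inverse
    exact hUU1
  have hrankB : W₀.rank = B.rank := by
    rw [hW₀]
    exact Matrix.rank_mul_eq_right_of_isUnit_det U B hUdet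
  have hrankD : B.rank = Fintype.card {i // lam i ≠ 0} := by
    have h1 : (B * Bᵀ).rank = B.rank := Matrix.rank_self_mul_transpose B
    rw [← h1, hBB, Matrix.rank_diagonal]
  have hcard : Cn - 1 ≤ Fintype.card {i // lam i ≠ 0} := by
    rw [← hrankD, ← hrankB]; exact hrank
  -- existence of a zero eigenvalue index with nonzero w
  have hex : ∃ i₀, w i₀ ≠ 0 := by
    by_contra hno
    push_neg at hno
    have : ∑ i, w i ^ 2 = 0 := Finset.sum_eq_zero fun i _ => by rw [hno i]; ring
    rw [hsumw] at this
    exact absurd this (by positivity)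
  obtain ⟨i₀, hw0⟩ := hex
  have hlam0 : lam i₀ = 0 := by
    rcases mul_eq_zero.1 (hwl i₀) with h | h
    · exact absurd h hw0
    · exact h
  -- uniqueness of the zero eigenvalue
  have huniq : ∀ i, lam i = 0 → i = i₀ := by
    intro i hi
    by_contra hne
    have hsub : Finset.univ.filter (fun i => lam i ≠ 0) ⊆ Finset.univ \ {i, i₀} := by
      intro x hx
      simp only [Finset.mem_filter, Finset.mem_univ, true_and] at hx
      simp only [Finset.mem_sdiff, Finset.mem_univ, true_and, Finset.mem_insert,
        Finset.mem_singleton]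
      rintro (rfl | rfl)
      · exact hx hi
      · exact hx hlam0
    have hcard2 : (Finset.univ \ ({i, i₀} : Finset (Fin Cn))).card = Cn - 2 := by
      rw [Finset.card_sdiff_of_subset (by simp)]
      simp [Finset.card_insert_of_notMem, hne]
    have h3 : Fintype.card {i // lam i ≠ 0} ≤ Cn - 2 := by
      rw [Fintype.card_subtype]
      calc (Finset.univ.filter (fun i => lam i ≠ 0)).card
          ≤ (Finset.univ \ ({i, i₀} : Finset (Fin Cn))).card := Finset.card_le_card hsub
        _ = Cn - 2 := hcard2
    have h4 : (2 : ℕ) ≤ Cn := by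
      rcases Nat.lt_or_ge Cn 2 with h | h
      · exfalso
        haveI : Subsingleton (Fin Cn) := by
          apply Fintype.card_le_one_iff_subsingleton.mp
          simpa using Nat.lt_succ_iff.mp h
        exact hne (Subsingleton.elim i i₀)
      · exact h
    omega
  have hzero : ∀ i, lam i = 0 ↔ i = i₀ := fun i =>
    ⟨huniq i, fun h => h ▸ hlam0⟩
  -- w vanishes off i₀ and w i₀ ^ 2 = Cn
  have hwoff : ∀ i, i ≠ i₀ → w i = 0 := by
    intro i hi
    rcases mul_eq_zero.1 (hwl i) with h | h
    · exact h
    · exact absurd (huniq i h) hi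
  have hw2 : w i₀ ^ 2 = (Cn : ℝ) := by
    rw [← hsumw]
    rw [Finset.sum_eq_single i₀ (fun i _ hi => by rw [hwoff i hi]; ring)
      (fun h => absurd (Finset.mem_univ i₀) h)]
  -- all entries of column i₀ of U are equal
  have hUsq : ∑ c, U c i₀ ^ 2 = 1 := by
    have := congrFun (congrFun hU1U i₀) i₀
    rw [Matrix.mul_apply] at this
    simp only [Matrix.transpose_apply, Matrix.one_apply_eq] at this
    rw [← this]
    exact Finset.sum_congr rfl fun c _ => (pow_two _)
  have hCne : (Cn : ℝ) ≠ 0 := Nat.cast_ne_zero.2 hC.ne'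
  have hUcol : ∀ c, U c i₀ = w i₀ / Cn := by
    have hzero2 : ∑ c, (U c i₀ - w i₀ / Cn) ^ 2 = 0 := by
      have expand : ∀ c, (U c i₀ - w i₀ / Cn) ^ 2
          = U c i₀ ^ 2 - 2 * (w i₀ / Cn) * U c i₀ + (w i₀ / Cn) ^ 2 := fun c => by ring
      rw [Finset.sum_congr rfl (fun c _ => expand c)]
      rw [Finset.sum_add_distrib, Finset.sum_sub_distrib, hUsq, ← Finset.mul_sum]
      rw [Finset.sum_const, Finset.card_univ, Fintype.card_fin, nsmul_eq_mul]
      have hsw : ∑ c, U c i₀ = w i₀ := rfl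
      rw [hsw]
      field_simp
      nlinarith [hw2]
    intro c
    have := (Finset.sum_eq_zero_iff_of_nonneg
      (fun c _ => sq_nonneg (U c i₀ - w i₀ / Cn))).1 hzero2 c (Finset.mem_univ c)
    have h5 : U c i₀ - w i₀ / Cn = 0 := by
      nlinarith [this]
    linarith
  refine ⟨i₀, hzero, fun c d => ?_⟩
  rw [hUcol c, hUcol d, div_mul_div_comm,
    show w i₀ * w i₀ = (Cn:ℝ) from by nlinarith [hw2]]
  rw [show ((Cn:ℝ) * (Cn:ℝ)) = (Cn:ℝ)^2 from by ring]
  rw [div_eq_iff (pow_ne_zero 2 hCne)]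
  field_simp

end ode

section uniq
variable {Cn Nn pn : ℕ}

/-- Full gradient-flow vector field on the product state space. -/
def Fvec (Cn Nn pn : ℕ) :
    (Matrix (Fin pn) (Fin Cn × Fin Nn) ℝ) × (Matrix (Fin Cn) (Fin pn) ℝ) × (Fin Cn → ℝ) →
    (Matrix (Fin pn) (Fin Cn × Fin Nn) ℝ) × (Matrix (Fin Cn) (Fin pn) ℝ) × (Fin Cn → ℝ) :=
  fun z =>
    (-(z.2.1ᵀ * Amat Cn Nn pn z.1 z.2.1 z.2.2),
     -(Amat Cn Nn pn z.1 z.2.1 z.2.2 * z.1ᵀ),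
     fun c => -(∑ cn : Fin Cn × Fin Nn, Amat Cn Nn pn z.1 z.2.1 z.2.2 c cn))

lemma contDiff_Fvec : ContDiff ℝ 1 (Fvec Cn Nn pn) := by
  have e1 : ∀ (j : Fin pn) (cn : Fin Cn × Fin Nn),
      ContDiff ℝ 1 (fun z : (Matrix (Fin pn) (Fin Cn × Fin Nn) ℝ) ×
        (Matrix (Fin Cn) (Fin pn) ℝ) × (Fin Cn → ℝ) => z.1 j cn) :=
    fun j cn => (contDiff_pi.mp ((contDiff_pi.mp contDiff_fst) j)) cn
  have e2 : ∀ (c : Fin Cn) (j : Fin pn),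
      ContDiff ℝ 1 (fun z : (Matrix (Fin pn) (Fin Cn × Fin Nn) ℝ) ×
        (Matrix (Fin Cn) (Fin pn) ℝ) × (Fin Cn → ℝ) => z.2.1 c j) :=
    fun c j => (contDiff_pi.mp ((contDiff_pi.mp (contDiff_fst.comp contDiff_snd)) c)) j
  have e3 : ∀ (c : Fin Cn),
      ContDiff ℝ 1 (fun z : (Matrix (Fin pn) (Fin Cn × Fin Nn) ℝ) ×
        (Matrix (Fin Cn) (Fin pn) ℝ) × (Fin Cn → ℝ) => z.2.2 c) :=
    fun c => (contDiff_pi.mp (contDiff_snd.comp contDiff_snd)) c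
  have eA : ∀ (c : Fin Cn) (cn : Fin Cn × Fin Nn),
      ContDiff ℝ 1 (fun z : (Matrix (Fin pn) (Fin Cn × Fin Nn) ℝ) ×
        (Matrix (Fin Cn) (Fin pn) ℝ) × (Fin Cn → ℝ) =>
          Amat Cn Nn pn z.1 z.2.1 z.2.2 c cn) := by
    intro c cn
    have heq : (fun z : (Matrix (Fin pn) (Fin Cn × Fin Nn) ℝ) ×
        (Matrix (Fin Cn) (Fin pn) ℝ) × (Fin Cn → ℝ) =>
          Amat Cn Nn pn z.1 z.2.1 z.2.2 c cn)
        = fun z => (∑ j', z.2.1 c j' * z.1 j' cn) + z.2.2 c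
            - (if cn.1 = c then (1:ℝ) else 0) := by
      funext z
      simp [Amat, Matrix.mul_apply]
    rw [heq]
    exact ((ContDiff.sum fun j' _ => (e2 c j').mul (e1 j' cn)).add (e3 c)).sub contDiff_const
  refine ContDiff.prodMk ?_ (ContDiff.prodMk ?_ ?_)
  · apply contDiff_pi.mpr
    intro j
    apply contDiff_pi.mpr
    intro cn
    have heq : (fun z : (Matrix (Fin pn) (Fin Cn × Fin Nn) ℝ) ×
        (Matrix (Fin Cn) (Fin pn) ℝ) × (Fin Cn → ℝ) =>
          (-(z.2.1ᵀ * Amat Cn Nn pn z.1 z.2.1 z.2.2)) j cn)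
        = fun z => -(∑ c, z.2.1 c j * Amat Cn Nn pn z.1 z.2.1 z.2.2 c cn) := by
      funext z
      simp [Matrix.mul_apply]
    rw [heq]
    exact (ContDiff.sum fun c _ => (e2 c j).mul (eA c cn)).neg
  · apply contDiff_pi.mpr
    intro c
    apply contDiff_pi.mpr
    intro j
    have heq : (fun z : (Matrix (Fin pn) (Fin Cn × Fin Nn) ℝ) ×
        (Matrix (Fin Cn) (Fin pn) ℝ) × (Fin Cn → ℝ) =>
          (-(Amat Cn Nn pn z.1 z.2.1 z.2.2 * z.1ᵀ)) c j)
        = fun z => -(∑ cn, Amat Cn Nn pn z.1 z.2.1 z.2.2 c cn * z.1 j cn) := by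
      funext z
      simp [Matrix.mul_apply]
    rw [heq]
    exact (ContDiff.sum fun cn _ => (eA c cn).mul (e1 j cn)).neg
  · apply contDiff_pi.mpr
    intro c
    exact (ContDiff.sum fun cn _ => eA c cn).neg

lemma ODE_uniqueness {f g : ℝ → (Matrix (Fin pn) (Fin Cn × Fin Nn) ℝ) ×
      (Matrix (Fin Cn) (Fin pn) ℝ) × (Fin Cn → ℝ)}
    (hf : ∀ t ∈ Ici (0:ℝ), HasDerivWithinAt f (Fvec Cn Nn pn (f t)) (Ici 0) t)
    (hg : ∀ t ∈ Ici (0:ℝ), HasDerivWithinAt g (Fvec Cn Nn pn (g t)) (Ici 0) t)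
    (h0 : f 0 = g 0) {t : ℝ} (ht : 0 ≤ t) : f t = g t := by
  have hcf : ContinuousOn f (Icc 0 t) := fun u hu =>
    ((hf u hu.1).continuousWithinAt).mono (Icc_subset_Ici_self)
  have hcg : ContinuousOn g (Icc 0 t) := fun u hu =>
    ((hg u hu.1).continuousWithinAt).mono (Icc_subset_Ici_self)
  obtain ⟨R1, hR1⟩ := (isCompact_Icc (a := (0:ℝ)) (b := t)).exists_bound_of_continuousOn hcf
  obtain ⟨R2, hR2⟩ := (isCompact_Icc (a := (0:ℝ)) (b := t)).exists_bound_of_continuousOn hcg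
  set R : ℝ := max R1 R2 with hR
  -- Lipschitz constant on the closed ball of radius R
  have hcompact : IsCompact (Metric.closedBall
      (0 : (Matrix (Fin pn) (Fin Cn × Fin Nn) ℝ) ×
        (Matrix (Fin Cn) (Fin pn) ℝ) × (Fin Cn → ℝ)) R) := isCompact_closedBall _ _
  obtain ⟨K, hLip⟩ := (contDiff_Fvec (Cn := Cn) (Nn := Nn) (pn := pn)).contDiffOn.exists_lipschitzOnWith
    one_ne_zero (convex_closedBall _ _) hcompact
  have heq : EqOn f g (Icc 0 t) := by
    apply ODE_solution_unique_of_mem_Icc_right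
      (v := fun _ z => Fvec Cn Nn pn z) (s := fun _ => Metric.closedBall 0 R)
      (K := K) (fun _ _ => hLip) hcf
      (fun u hu => (hf u hu.1).mono (Ici_subset_Ici.2 hu.1))
      (fun u hu => by
        rw [Metric.mem_closedBall, dist_zero_right]
        exact (hR1 _ (Ico_subset_Icc_self hu)).trans (le_max_left _ _))
      hcg
      (fun u hu => (hg u hu.1).mono (Ici_subset_Ici.2 hu.1))
      (fun u hu => by
        rw [Metric.mem_closedBall, dist_zero_right]
        exact (hR2 _ (Ico_subset_Icc_self hu)).trans (le_max_right _ _))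
      h0
  exact heq (right_mem_Icc.2 ht)

end uniq

/-- **Statement 18.** Let `(H₀, W₀, b₀) ∈ S` with `rank W₀ ≥ C - 1` and let
`Z(t) = (H(t), W(t), b(t))` solve the gradient flow `Z' = -∇R_e(Z)` (where
`∇R_e = (Wᵀ A, A Hᵀ, A 1_{CN})` with `A = W H + b 1_{CN}ᵀ - I_C ⊗ 1_Nᵀ`) with
`Z(0) = (H₀, W₀, b₀)`.  Then `lim_{t→∞} Z(t)` exists and exhibits strong neural
collapse: the limit `(H∞, W∞, b∞)` satisfies `W∞ W∞ᵀ = √N (I_C - (1/C) 1_C 1_Cᵀ)`,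
`H∞ = (1/√N)(W∞ ⊗ 1_N)ᵀ`, and `b∞ = (1/C) 1_C`. -/
theorem gradient_flow_limit_snc (C N p : ℕ) (hC : 0 < C) (hN : 0 < N) (hp : 0 < p)
    (H₀ : Matrix (Fin p) (Fin C × Fin N) ℝ) (W₀ : Matrix (Fin C) (Fin p) ℝ)
    (b₀ : Fin C → ℝ)
    (hS0 : memS C N p H₀ W₀ b₀)
    (hrank : C - 1 ≤ W₀.rank)
    (H : ℝ → Matrix (Fin p) (Fin C × Fin N) ℝ)
    (W : ℝ → Matrix (Fin C) (Fin p) ℝ)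
    (b : ℝ → (Fin C → ℝ))
    (hH0 : H 0 = H₀) (hW0 : W 0 = W₀) (hb0 : b 0 = b₀)
    (hH' : ∀ t ∈ Ici (0 : ℝ), HasDerivWithinAt H
      (-((W t)ᵀ * Amat C N p (H t) (W t) (b t))) (Ici 0) t)
    (hW' : ∀ t ∈ Ici (0 : ℝ), HasDerivWithinAt W
      (-(Amat C N p (H t) (W t) (b t) * (H t)ᵀ)) (Ici 0) t)
    (hb' : ∀ t ∈ Ici (0 : ℝ), HasDerivWithinAt b
      (fun c => -(∑ cn : Fin C × Fin N, Amat C N p (H t) (W t) (b t) c cn)) (Ici 0) t) :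
    ∃ (Hlim : Matrix (Fin p) (Fin C × Fin N) ℝ) (Wlim : Matrix (Fin C) (Fin p) ℝ)
      (blim : Fin C → ℝ),
      Tendsto H atTop (𝓝 Hlim) ∧ Tendsto W atTop (𝓝 Wlim) ∧ Tendsto b atTop (𝓝 blim) ∧
      Wlim * Wlimᵀ = Real.sqrt N •
        ((1 : Matrix (Fin C) (Fin C) ℝ) - (C : ℝ)⁻¹ • Matrix.of (fun _ _ => (1 : ℝ))) ∧
      Hlim = Matrix.of (fun j (cn : Fin C × Fin N) => (Real.sqrt N)⁻¹ * Wlim cn.1 j) ∧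
      blim = fun _ => (C : ℝ)⁻¹ := by
  classical
  have hNpos : (0:ℝ) < N := by exact_mod_cast hN
  set n : ℝ := Real.sqrt N with hn_def
  have hn : 0 < n := Real.sqrt_pos.2 hNpos
  have hn2 : n ^ 2 = (N:ℝ) := Real.sq_sqrt hNpos.le
  obtain ⟨hH₀eq, hcol0, β₀, hb₀eq⟩ := hS0
  -- spectral decomposition of W₀ W₀ᵀ
  have hherm : (W₀ * W₀ᵀ).IsHermitian := by
    have := Matrix.isHermitian_mul_conjTranspose_self W₀
    rwa [Matrix.conjTranspose_eq_transpose_of_trivial] at this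
  set U : Matrix (Fin C) (Fin C) ℝ :=
    (hherm.eigenvectorUnitary : Matrix (Fin C) (Fin C) ℝ) with hU
  set lam : Fin C → ℝ := hherm.eigenvalues with hlam_def
  have hstar : star U = Uᵀ := by
    rw [Matrix.star_eq_conjTranspose, Matrix.conjTranspose_eq_transpose_of_trivial]
  have hU1U : Uᵀ * U = 1 := by
    rw [← hstar]; exact Unitary.coe_star_mul_self _
  have hUU1 : U * Uᵀ = 1 := by
    rw [← hstar]; exact Unitary.coe_mul_star_self _
  set B : Matrix (Fin C) (Fin p) ℝ := Uᵀ * W₀ with hB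
  have hW₀UB : W₀ = U * B := by
    rw [hB, ← Matrix.mul_assoc, hUU1, Matrix.one_mul]
  have hBB : B * Bᵀ = Matrix.diagonal lam := by
    have hst := hherm.conjStarAlgAut_star_eigenvectorUnitary
    rw [Unitary.conjStarAlgAut_star_apply] at hst
    rw [hstar] at hst
    have h2 : B * Bᵀ = Uᵀ * (W₀ * W₀ᵀ) * U := by
      rw [hB, Matrix.transpose_mul, Matrix.transpose_transpose]
      simp only [Matrix.mul_assoc]
    rw [h2, hst]
    rfl
  have hlam : ∀ i, 0 ≤ lam i := by
    intro i
    have h := congrFun (congrFun hBB i) i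
    rw [Matrix.mul_apply, Matrix.diagonal_apply_eq] at h
    rw [← h]
    apply Finset.sum_nonneg
    intro j _
    rw [Matrix.transpose_apply]
    exact mul_self_nonneg _
  have hcolU : ∀ i, (∑ c, U c i) * lam i = 0 :=
    colU_lam_zero U B lam hBB W₀ hW₀UB hcol0
  obtain ⟨i₀, hzero, hUi₀⟩ :=
    spectral_kernel U B lam hC hU1U hUU1 hBB W₀ hW₀UB hcol0 hrank
  have hCne : (C:ℝ) ≠ 0 := Nat.cast_ne_zero.2 hC.ne'
  -- the explicit solution
  set gexp : ℝ → Matrix (Fin p) (Fin C × Fin N) ℝ × Matrix (Fin C) (Fin p) ℝ × (Fin C → ℝ) :=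
    fun t => (Hof (Nn := N) n (WexpM U B (fun i => gf n (lam i) t)),
      WexpM U B (fun i => gf n (lam i) t),
      fun _ : Fin C => betaf N C β₀ t) with hgexp
  have hgexp0 : gexp 0 = (H₀, W₀, b₀) := by
    have hone : (fun i => gf n (lam i) 0) = fun _ : Fin C => (1:ℝ) := by
      funext i; exact gf_zero n (lam i)
    have hW0 : WexpM U B (fun i => gf n (lam i) 0) = W₀ := by
      rw [hone, WexpM, Matrix.diagonal_one, Matrix.mul_one, ← hW₀UB]
    rw [hgexp]
    refine Prod.ext ?_ (Prod.ext ?_ ?_)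
    · show Hof (Nn := N) n (WexpM U B (fun i => gf n (lam i) 0)) = H₀
      rw [hW0, hH₀eq]
      rfl
    · exact hW0
    · show (fun _ : Fin C => betaf (N:ℝ) C β₀ 0) = b₀
      rw [hb₀eq]
      funext c
      rw [betaf_zero]
  have hgderiv : ∀ u ∈ Ici (0:ℝ),
      HasDerivWithinAt gexp (Fvec C N p (gexp u)) (Ici 0) u := by
    intro u hu
    have h1 := hasDerivAt_HexpT (Nn := N) n U B lam hn hlam hu
    have h2 := hasDerivAt_WexpT n U B lam hn hlam hu
    have h3 := hasDerivAt_bexpT (Cn := C) (N:ℝ) (C:ℝ) β₀ hCne u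
    have hId1 := H_ode_identity (Nn := N) n U B lam hU1U hBB hcolU hn.ne' hn2
      (fun i => gf n (lam i) u) (betaf N C β₀ u)
    have hId2 := W_ode_identity (Nn := N) n U B lam hU1U hBB hcolU hn.ne' hn2
      (fun i => gf n (lam i) u) (betaf N C β₀ u)
    have hId3 := b_ode_identity (Nn := N) n U B lam hBB hcolU hn.ne'
      (fun i => gf n (lam i) u) (betaf N C β₀ u)
    show HasDerivWithinAt gexp
      (-((WexpM U B (fun i => gf n (lam i) u))ᵀ *
          Amat C N p (Hof (Nn := N) n (WexpM U B (fun i => gf n (lam i) u)))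
            (WexpM U B (fun i => gf n (lam i) u)) (fun _ => betaf N C β₀ u)),
       -(Amat C N p (Hof (Nn := N) n (WexpM U B (fun i => gf n (lam i) u)))
            (WexpM U B (fun i => gf n (lam i) u)) (fun _ => betaf N C β₀ u) *
          (Hof (Nn := N) n (WexpM U B (fun i => gf n (lam i) u)))ᵀ),
       fun c => -(∑ cn : Fin C × Fin N,
          Amat C N p (Hof (Nn := N) n (WexpM U B (fun i => gf n (lam i) u)))
            (WexpM U B (fun i => gf n (lam i) u)) (fun _ => betaf N C β₀ u) c cn))
      (Ici 0) u
    rw [hId1, hId2, hId3]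
    exact ((h1.prodMk (h2.prodMk h3)).hasDerivWithinAt)
  have hfderiv : ∀ u ∈ Ici (0:ℝ),
      HasDerivWithinAt (fun t => (H t, W t, b t))
        (Fvec C N p (H u, W u, b u)) (Ici 0) u := by
    intro u hu
    exact (hH' u hu).prodMk ((hW' u hu).prodMk (hb' u hu))
  have hZeq : ∀ t : ℝ, 0 ≤ t → (H t, W t, b t) = gexp t := by
    intro t ht
    refine ODE_uniqueness hfderiv hgderiv ?_ ht
    rw [hgexp0, hH0, hW0, hb0]
  -- limits
  refine ⟨Hof (Nn := N) n (WexpM U B (fun i => (Real.sqrt (lam i / n))⁻¹)),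
    WexpM U B (fun i => (Real.sqrt (lam i / n))⁻¹), fun _ => (C:ℝ)⁻¹, ?_, ?_, ?_, ?_, ?_, ?_⟩
  · have h := tendsto_HexpT (Nn := N) n U B lam hn hBB hlam
    refine h.congr' ?_
    filter_upwards [eventually_ge_atTop (0:ℝ)] with t ht
    exact (congrArg Prod.fst (hZeq t ht)).symm
  · have h := tendsto_WexpT n U B lam hn hBB hlam
    refine h.congr' ?_
    filter_upwards [eventually_ge_atTop (0:ℝ)] with t ht
    exact (congrArg (fun z => z.2.1) (hZeq t ht)).symm
  · have h := tendsto_bexpT (Cn := C) (N:ℝ) (C:ℝ) β₀ hNpos (by exact_mod_cast hC)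
    refine h.congr' ?_
    filter_upwards [eventually_ge_atTop (0:ℝ)] with t ht
    exact (congrArg (fun z => z.2.2) (hZeq t ht)).symm
  · exact Wlim_mul_transpose n U B lam hBB hn hlam i₀ hzero hUi₀ hUU1
  · rfl
  · rfl

end
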